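/- arXiv:2305.11005 — 3 statements merged into one kernel-verified Lean document; each statement's English description precedes it below -/
import Mathlib

section
/- If two RochetNet menus M1 and M2, both indexed by {0,1,...,K}, are 0-reducible, then they are 0-mode-connected; moreover, the continuous path connecting them can be taken piecewise linear with only three linear pieces. -/
open MeasureTheory Finset

namespace RN

/-- A RochetNet menu: for each of the `K+1` option indices, an allocation in `[0,1]^n`
and a price. -/
abbrev Menu (n K : ℕ) := Fin (K + 1) → (Fin n → ℝ) × ℝ

/-- Inner product of a valuation and an allocation. -/
def dotp {n : ℕ} (v x : Fin n → ℝ) : ℝ := ∑ j, v j * x j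

/-- A valid menu: allocations in `[0,1]^n`, nonnegative prices, default option `(0,0)`. -/
def IsMenu {n K : ℕ} (M : Menu n K) : Prop :=
  (∀ k j, 0 ≤ (M k).1 j ∧ (M k).1 j ≤ 1) ∧ (∀ k, 0 ≤ (M k).2) ∧ M 0 = 0

/-- Utility of option `k` for valuation `v`. -/
def util {n K : ℕ} (M : Menu n K) (v : Fin n → ℝ) (k : Fin (K + 1)) : ℝ :=
  dotp v (M k).1 - (M k).2

/-- Price extracted at valuation `v`: the maximal price among utility-maximizing options. -/
noncomputable def price {n K : ℕ} (M : Menu n K) (v : Fin n → ℝ) : ℝ :=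
  sSup {p : ℝ | ∃ k, (∀ k', util M v k' ≤ util M v k) ∧ p = (M k).2}

/-- Option `k` is the buyer's selected option at `v`: it maximizes utility and, among
utility maximizers, has maximal price. -/
def Selected {n K : ℕ} (M : Menu n K) (v : Fin n → ℝ) (k : Fin (K + 1)) : Prop :=
  (∀ k', util M v k' ≤ util M v k) ∧ (M k).2 = price M v

/-- The set of valuations. -/
def V (n : ℕ) : Set (Fin n → ℝ) :=
  {v | (∀ j, 0 ≤ v j ∧ v j ≤ 1) ∧ ∑ j, v j ≤ 1}

/-- Expected revenue of menu `M` under valuation distribution `F`. -/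
noncomputable def Rev {n K : ℕ} (F : Measure (Fin n → ℝ)) (M : Menu n K) : ℝ :=
  ∫ v, price M v ∂F

/-- Option-wise convex combination `lam • M + (1 - lam) • M'` of two menus. -/
noncomputable def comb {n K : ℕ} (lam : ℝ) (M M' : Menu n K) : Menu n K :=
  fun k => (fun j => lam * (M k).1 j + (1 - lam) * (M' k).1 j,
            lam * (M k).2 + (1 - lam) * (M' k).2)

/-- `M` is `ε`-reducible: some subset `K'` of options containing the default option, of
cardinality at most `√(K+1)`, contains the buyer's selected option with probability
at least `1 - ε`. -/
def Reducible {n K : ℕ} (F : Measure (Fin n → ℝ)) (M : Menu n K) (ε : ℝ) : Prop :=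
  ∃ K' : Finset (Fin (K + 1)), 0 ∈ K' ∧ (K'.card : ℝ) ≤ Real.sqrt (K + 1) ∧
    (F {v | ∃ k ∈ K', Selected M v k}).toReal ≥ 1 - ε

/-- `M₁` and `M₂` are `ε`-mode-connected by a piecewise linear path with `pieces` linear
pieces, all whose menus are valid and have revenue at least `min (Rev M₁) (Rev M₂) - ε`. -/
def PLConnected {n K : ℕ} (F : Measure (Fin n → ℝ)) (M₁ M₂ : Menu n K) (ε : ℝ)
    (pieces : ℕ) : Prop :=
  ∃ P : Fin (pieces + 1) → Menu n K, P 0 = M₁ ∧ P (Fin.last pieces) = M₂ ∧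
    (∀ i, IsMenu (P i)) ∧
    ∀ i : Fin pieces, ∀ lam ∈ Set.Icc (0 : ℝ) 1,
      Rev F (comb lam (P i.castSucc) (P i.succ)) ≥ min (Rev F M₁) (Rev F M₂) - ε


section Aux

variable {n K : ℕ}

lemma measurable_util (M : Menu n K) (k : Fin (K + 1)) :
    Measurable fun v : Fin n → ℝ => util M v k := by
  have h : Measurable fun v : Fin n → ℝ => dotp v (M k).1 :=
    Finset.measurable_sum _ fun j _ => (measurable_pi_apply j).mul_const _
  exact h.sub measurable_const

lemma exists_max_util (M : Menu n K) (v : Fin n → ℝ) :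
    ∃ k, ∀ k', util M v k' ≤ util M v k :=
  Finite.exists_max _

lemma bddAbove_priceSet (M : Menu n K) (v : Fin n → ℝ) :
    BddAbove {p : ℝ | ∃ k, (∀ k', util M v k' ≤ util M v k) ∧ p = (M k).2} := by
  refine Set.Finite.bddAbove (Set.Finite.subset (Set.finite_range fun k => (M k).2) ?_)
  rintro p ⟨k, _, rfl⟩
  exact ⟨k, rfl⟩

lemma le_price {M : Menu n K} {v : Fin n → ℝ} {k : Fin (K + 1)}
    (h : ∀ k', util M v k' ≤ util M v k) : (M k).2 ≤ price M v :=
  le_csSup (bddAbove_priceSet M v) ⟨k, h, rfl⟩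

lemma price_nonneg (M : Menu n K) (hp : ∀ k, 0 ≤ (M k).2) (v : Fin n → ℝ) :
    0 ≤ price M v := by
  obtain ⟨k, hk⟩ := exists_max_util M v
  exact (hp k).trans (le_price hk)

lemma price_le (M : Menu n K) (v : Fin n → ℝ) {c : ℝ} (hc0 : 0 ≤ c)
    (hc : ∀ k, (M k).2 ≤ c) : price M v ≤ c :=
  Real.sSup_le (by rintro p ⟨k, _, rfl⟩; exact hc k) hc0

lemma measurable_price (M : Menu n K) (hp : ∀ k, 0 ≤ (M k).2) :
    Measurable fun v => price M v := by
  classical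
  have hne : (Finset.univ : Finset (Fin (K + 1))).Nonempty := ⟨0, Finset.mem_univ 0⟩
  have heq : (fun v => price M v) = Finset.univ.sup' hne
      (fun k => fun v => if ∀ k', util M v k' ≤ util M v k then (M k).2 else 0) := by
    funext v
    rw [Finset.sup'_apply]
    apply le_antisymm
    · apply Real.sSup_le
      · rintro p ⟨k, hk, rfl⟩
        refine le_trans ?_ (Finset.le_sup' _ (Finset.mem_univ k))
        simp [hk]
      · obtain ⟨k, hk⟩ := exists_max_util M v
        refine le_trans (hp k) (le_trans ?_ (Finset.le_sup' _ (Finset.mem_univ k)))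
        simp [hk]
    · apply Finset.sup'_le
      intro k _
      split_ifs with h
      · exact le_price h
      · exact price_nonneg M hp v
  rw [heq]
  refine Finset.measurable_sup' hne fun k _ => ?_
  refine Measurable.ite ?_ measurable_const measurable_const
  have : {v : Fin n → ℝ | ∀ k', util M v k' ≤ util M v k}
      = ⋂ k', {v | util M v k' ≤ util M v k} := Set.setOf_forall _
  rw [this]
  exact MeasurableSet.iInter fun k' => measurableSet_le (measurable_util M k') (measurable_util M k)

lemma integrable_price (F : Measure (Fin n → ℝ)) [IsFiniteMeasure F]
    (M : Menu n K) (hp : ∀ k, 0 ≤ (M k).2) :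
    Integrable (fun v => price M v) F := by
  classical
  have hne : (Finset.univ : Finset (Fin (K + 1))).Nonempty := ⟨0, Finset.mem_univ 0⟩
  have hc0 : (0 : ℝ) ≤ Finset.univ.sup' hne (fun k => (M k).2) :=
    le_trans (hp 0) (Finset.le_sup' (fun k => (M k).2) (Finset.mem_univ (0 : Fin (K + 1))))
  have hbd : ∀ v, ‖price M v‖ ≤ Finset.univ.sup' hne (fun k => (M k).2) := by
    intro v
    rw [Real.norm_eq_abs, abs_of_nonneg (price_nonneg M hp v)]
    exact price_le M v hc0 fun k => Finset.le_sup' (fun k => (M k).2) (Finset.mem_univ k)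
  exact (integrable_const _).mono' (measurable_price M hp).aestronglyMeasurable
    (Filter.Eventually.of_forall hbd)

lemma util_comb (M M' : Menu n K) (lam : ℝ) (v : Fin n → ℝ) (k : Fin (K + 1)) :
    util (comb lam M M') v k = lam * util M v k + (1 - lam) * util M' v k := by
  simp only [util, comb, dotp]
  have h : ∀ j ∈ (Finset.univ : Finset (Fin n)),
      v j * (lam * (M k).1 j + (1 - lam) * (M' k).1 j)
        = lam * (v j * (M k).1 j) + (1 - lam) * (v j * (M' k).1 j) := fun j _ => by ring
  rw [Finset.sum_congr rfl h, Finset.sum_add_distrib, ← Finset.mul_sum, ← Finset.mul_sum]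
  ring

lemma price_comb_ge (M M' : Menu n K) {lam : ℝ} (h0 : 0 ≤ lam) (h1 : lam ≤ 1)
    (v : Fin n → ℝ) (s : Fin (K + 1))
    (hA : ∀ k, util M v k ≤ util M v s) (hB : ∀ k, util M' v k ≤ util M' v s) :
    lam * (M s).2 + (1 - lam) * (M' s).2 ≤ price (comb lam M M') v := by
  have hmax : ∀ k, util (comb lam M M') v k ≤ util (comb lam M M') v s := by
    intro k
    rw [util_comb, util_comb]
    have hA' := hA k
    have hB' := hB k
    nlinarith
  exact le_price hmax

lemma exists_phi {m : ℕ} (A B : Finset (Fin (m + 1))) (h0A : 0 ∈ A) (h0B : 0 ∈ B)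
    (hcard : A.card * B.card ≤ m + 1) :
    ∃ φ : Fin (m + 1) → Fin (m + 1) × Fin (m + 1),
      (∀ k ∈ A, (φ k).1 = k) ∧ (∀ k ∈ B, (φ k).2 = k) ∧
      (∀ a ∈ A, ∀ b ∈ B, ∃ s, φ s = (a, b)) := by
  classical
  set U : Finset (Fin (m + 1)) := A ∪ B with hUdef
  set p0 : Fin (m + 1) → Fin (m + 1) × Fin (m + 1) :=
    fun s => (if s ∈ A then s else 0, if s ∈ B then s else 0) with hp0
  have hinj : Set.InjOn p0 ↑U := by
    intro s hs t ht hst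
    rw [Finset.mem_coe, hUdef, Finset.mem_union] at hs ht
    rw [hp0] at hst
    simp only [Prod.mk.injEq] at hst
    obtain ⟨h1, h2⟩ := hst
    by_cases hsA : s ∈ A
    · rw [if_pos hsA] at h1
      by_cases htA : t ∈ A
      · rw [if_pos htA] at h1; exact h1
      · rw [if_neg htA] at h1
        have htB : t ∈ B := ht.resolve_left htA
        rw [if_pos htB] at h2
        have hsB : s ∈ B := h1 ▸ h0B
        rw [if_pos hsB] at h2
        exact h2
    · have hsB : s ∈ B := hs.resolve_left hsA
      rw [if_pos hsB] at h2
      by_cases htB : t ∈ B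
      · rw [if_pos htB] at h2; exact h2
      · have htA : t ∈ A := ht.resolve_right htB
        rw [if_neg htB] at h2
        rw [if_neg hsA, if_pos htA] at h1
        rw [h2, ← h1]
  have himsub : U.image p0 ⊆ A ×ˢ B := by
    intro p hp
    obtain ⟨s, _, rfl⟩ := Finset.mem_image.mp hp
    rw [Finset.mem_product, hp0]
    constructor
    · dsimp only
      split_ifs with h
      · exact h
      · exact h0A
    · dsimp only
      split_ifs with h
      · exact h
      · exact h0B
  set R : Finset (Fin (m + 1) × Fin (m + 1)) := (A ×ˢ B) \ (U.image p0) with hRdef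
  have hcardR : R.card ≤ ((Finset.univ : Finset (Fin (m + 1))) \ U).card := by
    rw [hRdef, Finset.card_sdiff_of_subset (Finset.subset_univ U), Finset.card_sdiff_of_subset himsub,
      Finset.card_image_of_injOn hinj, Finset.card_product]
    have hU1 : U.card ≤ Finset.univ.card := Finset.card_le_univ U
    have hU2 : (Finset.univ : Finset (Fin (m + 1))).card = m + 1 := by
      simp [Finset.card_univ]
    omega
  obtain ⟨Fr', hFr'sub, hFr'card⟩ := Finset.exists_subset_card_eq hcardR
  have e : ↥R ≃ ↥Fr' := Fintype.equivOfCardEq (by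
    rw [Fintype.card_coe, Fintype.card_coe, hFr'card])
  refine ⟨fun s => if hU : s ∈ U then p0 s
    else if hF : s ∈ Fr' then ((e.symm ⟨s, hF⟩ : ↥R) : Fin (m + 1) × Fin (m + 1))
    else (0, 0), ?_, ?_, ?_⟩
  · intro k hk
    have hkU : k ∈ U := by rw [hUdef]; exact Finset.mem_union_left _ hk
    simp only [dif_pos hkU, hp0, if_pos hk]
  · intro k hk
    have hkU : k ∈ U := by rw [hUdef]; exact Finset.mem_union_right _ hk
    simp only [dif_pos hkU, hp0, if_pos hk]
  · intro a ha b hb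
    by_cases hmem : (a, b) ∈ U.image p0
    · obtain ⟨s, hsU, hs⟩ := Finset.mem_image.mp hmem
      exact ⟨s, by simp only [dif_pos hsU]; exact hs⟩
    · have hRm : (a, b) ∈ R := by
        rw [hRdef]
        exact Finset.mem_sdiff.mpr ⟨Finset.mem_product.mpr ⟨ha, hb⟩, hmem⟩
      refine ⟨(e ⟨(a, b), hRm⟩ : Fin (m + 1)), ?_⟩
      have hF : ((e ⟨(a, b), hRm⟩ : ↥Fr') : Fin (m + 1)) ∈ Fr' := (e ⟨(a, b), hRm⟩).2
      have hnU : ((e ⟨(a, b), hRm⟩ : ↥Fr') : Fin (m + 1)) ∉ U := fun hc =>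
        (Finset.mem_sdiff.mp (hFr'sub hF)).2 hc
      simp only [dif_neg hnU, dif_pos hF]
      have hsub : (⟨((e ⟨(a, b), hRm⟩ : ↥Fr') : Fin (m + 1)), hF⟩ : ↥Fr')
          = e ⟨(a, b), hRm⟩ := Subtype.ext rfl
      rw [hsub, Equiv.symm_apply_apply]

lemma ae_selected (F : Measure (Fin n → ℝ)) [IsProbabilityMeasure F]
    (M : Menu n K) (hp : ∀ k, 0 ≤ (M k).2) (S : Finset (Fin (K + 1)))
    (hge : (F {v | ∃ k ∈ S, Selected M v k}).toReal ≥ 1) :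
    ∀ᵐ v ∂F, ∃ k ∈ S, Selected M v k := by
  have hmeas : MeasurableSet {v | ∃ k ∈ S, Selected M v k} := by
    have hrw : {v | ∃ k ∈ S, Selected M v k} = ⋃ k ∈ S,
        ({v | ∀ k', util M v k' ≤ util M v k} ∩ {v | (M k).2 = price M v}) := by
      ext v
      simp only [Set.mem_setOf_eq, Set.mem_iUnion, Set.mem_inter_iff, Selected]
      tauto
    rw [hrw]
    refine MeasurableSet.biUnion S.countable_toSet fun k _ => MeasurableSet.inter ?_ ?_
    · have : {v : Fin n → ℝ | ∀ k', util M v k' ≤ util M v k}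
          = ⋂ k', {v | util M v k' ≤ util M v k} := Set.setOf_forall _
      rw [this]
      exact MeasurableSet.iInter fun k' =>
        measurableSet_le (measurable_util M k') (measurable_util M k)
    · exact measurableSet_eq_fun measurable_const (measurable_price M hp)
  have h1 : F {v | ∃ k ∈ S, Selected M v k} = 1 := by
    have hle : F {v | ∃ k ∈ S, Selected M v k} ≤ 1 := prob_le_one
    have hle' : (F {v | ∃ k ∈ S, Selected M v k}).toReal ≤ 1 := by
      simpa using ENNReal.toReal_mono ENNReal.one_ne_top hle
    exact (ENNReal.toReal_eq_one_iff _).mp (le_antisymm hle' hge)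
  have h0 : F {v | ∃ k ∈ S, Selected M v k}ᶜ = 0 :=
    (prob_compl_eq_zero_iff hmeas).mpr h1
  rw [ae_iff]
  exact h0

end Aux

/-- If two RochetNet menus `M₁`, `M₂` (indexed by `{0,…,K}`) are
`0`-reducible, then they are `0`-mode-connected via a piecewise linear path with three
linear pieces. -/
theorem statement0 {n K : ℕ} (F : Measure (Fin n → ℝ)) [IsProbabilityMeasure F]
    (hFV : F (V n) = 1) (M₁ M₂ : Menu n K) (hM₁ : IsMenu M₁) (hM₂ : IsMenu M₂)
    (hr₁ : Reducible F M₁ 0) (hr₂ : Reducible F M₂ 0) :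
    PLConnected F M₁ M₂ 0 3 := by
  classical
  obtain ⟨A, h0A, hcA, hmA⟩ := hr₁
  obtain ⟨B, h0B, hcB, hmB⟩ := hr₂
  -- product cardinality bound
  have hprod : A.card * B.card ≤ K + 1 := by
    have hmul : (A.card : ℝ) * (B.card : ℝ) ≤ Real.sqrt (K + 1) * Real.sqrt (K + 1) :=
      mul_le_mul hcA hcB (Nat.cast_nonneg _) (Real.sqrt_nonneg _)
    rw [Real.mul_self_sqrt (by positivity)] at hmul
    exact_mod_cast hmul
  obtain ⟨φ, hφA, hφB, hφsurj⟩ := exists_phi A B h0A h0B hprod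
  set Q1 : Menu n K := fun s => M₁ ((φ s).1) with hQ1def
  set Q2 : Menu n K := fun s => M₂ ((φ s).2) with hQ2def
  have hQ1menu : IsMenu Q1 := by
    refine ⟨fun k j => hM₁.1 _ j, fun k => hM₁.2.1 _, ?_⟩
    show M₁ ((φ 0).1) = 0
    rw [hφA 0 h0A]
    exact hM₁.2.2
  have hQ2menu : IsMenu Q2 := by
    refine ⟨fun k j => hM₂.1 _ j, fun k => hM₂.2.1 _, ?_⟩
    show M₂ ((φ 0).2) = 0
    rw [hφB 0 h0B]
    exact hM₂.2.2
  have hae1 : ∀ᵐ v ∂F, ∃ k ∈ A, Selected M₁ v k :=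
    ae_selected F M₁ hM₁.2.1 A (by simpa using hmA)
  have hae2 : ∀ᵐ v ∂F, ∃ k ∈ B, Selected M₂ v k :=
    ae_selected F M₂ hM₂.2.1 B (by simpa using hmB)
  have hint1 : Integrable (fun v => price M₁ v) F := integrable_price F M₁ hM₁.2.1
  have hint2 : Integrable (fun v => price M₂ v) F := integrable_price F M₂ hM₂.2.1
  -- generic revenue lower bound
  have hRevGe : ∀ (Ma Mb : Menu n K) (lam : ℝ), 0 ≤ lam → lam ≤ 1 →
      (∀ k, 0 ≤ (Ma k).2) → (∀ k, 0 ≤ (Mb k).2) →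
      ∀ g : (Fin n → ℝ) → ℝ, Integrable g F →
      (∀ᵐ v ∂F, g v ≤ price (comb lam Ma Mb) v) →
      ∫ v, g v ∂F ≤ Rev F (comb lam Ma Mb) := by
    intro Ma Mb lam h0 h1 hpa hpb g hg hle
    refine integral_mono_ae hg (integrable_price F _ ?_) hle
    intro k
    have ha := hpa k
    have hb := hpb k
    show 0 ≤ lam * (Ma k).2 + (1 - lam) * (Mb k).2
    nlinarith
  refine ⟨![M₁, Q1, Q2, M₂], rfl, rfl, ?_, ?_⟩
  · intro i
    fin_cases i
    · exact hM₁
    · exact hQ1menu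
    · exact hQ2menu
    · exact hM₂
  · intro i lam hlam
    obtain ⟨hl0, hl1⟩ := hlam
    rw [sub_zero]
    fin_cases i
    · -- piece 1 : M₁ → Q1
      show min (Rev F M₁) (Rev F M₂) ≤ Rev F (comb lam M₁ Q1)
      have haep : ∀ᵐ v ∂F, price M₁ v ≤ price (comb lam M₁ Q1) v := by
        filter_upwards [hae1] with v hv
        obtain ⟨k1, hk1A, hk1max, hk1p⟩ := hv
        have hQmax : ∀ k, util Q1 v k ≤ util Q1 v k1 := by
          intro k
          show util M₁ v ((φ k).1) ≤ util M₁ v ((φ k1).1)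
          rw [hφA k1 hk1A]
          exact hk1max _
        have h := price_comb_ge M₁ Q1 hl0 hl1 v k1 hk1max hQmax
        have hq1 : (Q1 k1).2 = (M₁ k1).2 := by
          show (M₁ ((φ k1).1)).2 = (M₁ k1).2
          rw [hφA k1 hk1A]
        rw [hq1, hk1p] at h
        calc price M₁ v = lam * price M₁ v + (1 - lam) * price M₁ v := by ring
          _ ≤ _ := h
      have hineq := hRevGe M₁ Q1 lam hl0 hl1 hM₁.2.1 hQ1menu.2.1 _ hint1 haep
      exact le_trans (min_le_left _ _) hineq
    · -- piece 2 : Q1 → Q2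
      show min (Rev F M₁) (Rev F M₂) ≤ Rev F (comb lam Q1 Q2)
      have haep : ∀ᵐ v ∂F,
          lam * price M₁ v + (1 - lam) * price M₂ v ≤ price (comb lam Q1 Q2) v := by
        filter_upwards [hae1, hae2] with v hv1 hv2
        obtain ⟨k1, hk1A, hk1max, hk1p⟩ := hv1
        obtain ⟨k2, hk2B, hk2max, hk2p⟩ := hv2
        obtain ⟨s, hs⟩ := hφsurj k1 hk1A k2 hk2B
        have hQ1max : ∀ k, util Q1 v k ≤ util Q1 v s := by
          intro k
          show util M₁ v ((φ k).1) ≤ util M₁ v ((φ s).1)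
          rw [hs]
          exact hk1max _
        have hQ2max : ∀ k, util Q2 v k ≤ util Q2 v s := by
          intro k
          show util M₂ v ((φ k).2) ≤ util M₂ v ((φ s).2)
          rw [hs]
          exact hk2max _
        have h := price_comb_ge Q1 Q2 hl0 hl1 v s hQ1max hQ2max
        have hq1 : (Q1 s).2 = price M₁ v := by
          show (M₁ ((φ s).1)).2 = price M₁ v
          rw [hs]
          exact hk1p
        have hq2 : (Q2 s).2 = price M₂ v := by
          show (M₂ ((φ s).2)).2 = price M₂ v
          rw [hs]
          exact hk2p
        rw [hq1, hq2] at h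
        exact h
      have hg : Integrable (fun v => lam * price M₁ v + (1 - lam) * price M₂ v) F :=
        (hint1.const_mul lam).add (hint2.const_mul (1 - lam))
      have hineq := hRevGe Q1 Q2 lam hl0 hl1 hQ1menu.2.1 hQ2menu.2.1 _ hg haep
      have hsplit : ∫ v, (lam * price M₁ v + (1 - lam) * price M₂ v) ∂F
          = lam * Rev F M₁ + (1 - lam) * Rev F M₂ := by
        rw [integral_add (hint1.const_mul lam) (hint2.const_mul (1 - lam)),
          integral_const_mul, integral_const_mul]
        rfl
      rw [hsplit] at hineq
      refine le_trans ?_ hineq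
      have h1 := min_le_left (Rev F M₁) (Rev F M₂)
      have h2 := min_le_right (Rev F M₁) (Rev F M₂)
      nlinarith
    · -- piece 3 : Q2 → M₂
      show min (Rev F M₁) (Rev F M₂) ≤ Rev F (comb lam Q2 M₂)
      have haep : ∀ᵐ v ∂F, price M₂ v ≤ price (comb lam Q2 M₂) v := by
        filter_upwards [hae2] with v hv
        obtain ⟨k2, hk2B, hk2max, hk2p⟩ := hv
        have hQmax : ∀ k, util Q2 v k ≤ util Q2 v k2 := by
          intro k
          show util M₂ v ((φ k).2) ≤ util M₂ v ((φ k2).2)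
          rw [hφB k2 hk2B]
          exact hk2max _
        have h := price_comb_ge Q2 M₂ hl0 hl1 v k2 hQmax hk2max
        have hq2 : (Q2 k2).2 = (M₂ k2).2 := by
          show (M₂ ((φ k2).2)).2 = (M₂ k2).2
          rw [hφB k2 hk2B]
        rw [hq2, hk2p] at h
        calc price M₂ v = lam * price M₂ v + (1 - lam) * price M₂ v := by ring
          _ ≤ _ := h
      have hineq := hRevGe Q2 M₂ lam hl0 hl1 hQ2menu.2.1 hM₂.2.1 _ hint2 haep
      exact le_trans (min_le_right _ _) hineq

end RN
end

section
/- Let S be a finite set with |S| = s² for some positive integer s, and let K1, K2 ⊆ S with |K1| = |K2| = s. Then there exists a bijection φ : S → K1 × K2 such that for every k ∈ K1 one has φ(k) ∈ {k} × K2, and for every k ∈ K2 one has φ(k) ∈ K1 × {k}. -/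
/-- Let `S` be a finite set with `|S| = s²` for a positive integer `s`,
and let `K₁, K₂ ⊆ S` with `|K₁| = |K₂| = s`.  Then there is a bijection
`φ : S → K₁ × K₂` (injective, with range exactly `K₁ × K₂`) such that `φ k ∈ {k} × K₂`
for every `k ∈ K₁` and `φ k ∈ K₁ × {k}` for every `k ∈ K₂`. -/
theorem statement1 {S : Type*} [Fintype S] (s : ℕ) (hs : 0 < s)
    (hcard : Fintype.card S = s ^ 2) (K₁ K₂ : Finset S)
    (h₁ : K₁.card = s) (h₂ : K₂.card = s) :
    ∃ φ : S → S × S, Function.Injective φ ∧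
      (∀ k, (φ k).1 ∈ K₁ ∧ (φ k).2 ∈ K₂) ∧
      (∀ p : S × S, p.1 ∈ K₁ → p.2 ∈ K₂ → ∃ k, φ k = p) ∧
      (∀ k ∈ K₁, (φ k).1 = k) ∧ (∀ k ∈ K₂, (φ k).2 = k) := by
  classical
  -- Step 1: an injective map on K₁ ∪ K₂ with the boundary conditions
  have key : ∃ j : {x : S // x ∈ K₁ ∪ K₂} → (↥K₁ × ↥K₂), Function.Injective j ∧
      (∀ x : {x : S // x ∈ K₁ ∪ K₂},
        (x.1 ∈ K₁ → ((j x).1 : S) = x.1) ∧ (x.1 ∈ K₂ → ((j x).2 : S) = x.1)) := by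
    rcases (K₁ ∩ K₂).eq_empty_or_nonempty with hd | ⟨c, hc⟩
    · -- disjoint case
      have hdisj : Disjoint K₁ K₂ := Finset.disjoint_iff_inter_eq_empty.mpr hd
      have hs2 : 2 ≤ s := by
        have hle : (K₁ ∪ K₂).card ≤ Fintype.card S := Finset.card_le_card (Finset.subset_univ _)
        rw [Finset.card_union_of_disjoint hdisj, h₁, h₂, hcard, pow_two] at hle
        have : 2 * s ≤ s * s := by omega
        exact Nat.le_of_mul_le_mul_right (by omega) hs
      obtain ⟨n, rfl⟩ : ∃ n, s = n + 2 := ⟨s - 2, by omega⟩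
      have hc1 : Fintype.card ↥K₁ = n + 2 := by simp [Fintype.card_coe, h₁]
      have hc2 : Fintype.card ↥K₂ = n + 2 := by simp [Fintype.card_coe, h₂]
      let e : ↥K₁ ≃ ↥K₂ := Fintype.equivOfCardEq (by rw [hc1, hc2])
      let t : ↥K₁ ≃ Fin (n + 2) := Fintype.equivFinOfCardEq hc1
      let σ : ↥K₁ ≃ ↥K₁ := t.trans ((finRotate (n + 2)).trans t.symm)
      have hσ : ∀ a : ↥K₁, σ a ≠ a := by
        intro a ha
        have : finRotate (n + 2) (t a) = t a := by
          have := congrArg t ha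
          simpa [σ] using this
        rw [finRotate_succ_apply] at this
        have h10 : (1 : Fin (n + 2)) = 0 := by
          have := congrArg (fun z => z - t a) this
          simpa using this
        exact one_ne_zero h10
      have hmem2 : ∀ x : {x : S // x ∈ K₁ ∪ K₂}, x.1 ∉ K₁ → x.1 ∈ K₂ :=
        fun x hx => (Finset.mem_union.mp x.2).resolve_left hx
      refine ⟨fun x => if h1 : x.1 ∈ K₁ then (⟨x.1, h1⟩, e ⟨x.1, h1⟩)
        else (σ (e.symm ⟨x.1, hmem2 x h1⟩), ⟨x.1, hmem2 x h1⟩), ?_, ?_⟩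
      · intro a b hab
        by_cases ha : a.1 ∈ K₁ <;> by_cases hb : b.1 ∈ K₁ <;>
          simp only [ha, hb, dif_pos, dif_neg, not_false_iff, Prod.mk.injEq] at hab
        · exact Subtype.ext (by simpa using hab.1)
        · exfalso
          have h2 : e ⟨a.1, ha⟩ = ⟨b.1, hmem2 b hb⟩ := hab.2
          have : e.symm ⟨b.1, hmem2 b hb⟩ = ⟨a.1, ha⟩ := by rw [← h2, Equiv.symm_apply_apply]
          rw [this] at hab
          exact hσ _ hab.1.symm
        · exfalso
          have h2 : (⟨a.1, hmem2 a ha⟩ : ↥K₂) = e ⟨b.1, hb⟩ := hab.2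
          have : e.symm ⟨a.1, hmem2 a ha⟩ = ⟨b.1, hb⟩ := by rw [h2, Equiv.symm_apply_apply]
          rw [this] at hab
          exact hσ _ hab.1
        · exact Subtype.ext (by simpa using hab.2)
      · intro x
        constructor
        · intro hx1; simp [hx1]
        · intro hx2
          have hx1 : x.1 ∉ K₁ := fun h => (Finset.disjoint_left.mp hdisj h) hx2
          simp [hx1]
    · -- intersection nonempty
      have hc1 : c ∈ K₁ := (Finset.mem_inter.mp hc).1
      have hc2 : c ∈ K₂ := (Finset.mem_inter.mp hc).2
      have hmem2 : ∀ x : {x : S // x ∈ K₁ ∪ K₂}, x.1 ∉ K₁ → x.1 ∈ K₂ :=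
        fun x hx => (Finset.mem_union.mp x.2).resolve_left hx
      refine ⟨fun x => if h1 : x.1 ∈ K₁ then
          (⟨x.1, h1⟩, if h2 : x.1 ∈ K₂ then ⟨x.1, h2⟩ else ⟨c, hc2⟩)
        else (⟨c, hc1⟩, ⟨x.1, hmem2 x h1⟩), ?_, ?_⟩
      · intro a b hab
        by_cases ha : a.1 ∈ K₁ <;> by_cases hb : b.1 ∈ K₁ <;>
          simp only [ha, hb, dif_pos, dif_neg, not_false_iff, Prod.mk.injEq] at hab
        · exact Subtype.ext (by simpa using hab.1)
        · exfalso
          have hac : a.1 = c := by simpa using hab.1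
          have ha2 : a.1 ∈ K₂ := hac ▸ hc2
          rw [dif_pos ha2] at hab
          have : a.1 = b.1 := by simpa using hab.2
          exact hb (this ▸ ha)
        · exfalso
          have hbc : b.1 = c := by simpa using hab.1.symm
          have hb2 : b.1 ∈ K₂ := hbc ▸ hc2
          rw [dif_pos hb2] at hab
          have : a.1 = b.1 := by simpa using hab.2
          exact ha (this ▸ hb)
        · exact Subtype.ext (by simpa using hab.2)
      · intro x
        constructor
        · intro hx1; simp [hx1]
        · intro hx2
          by_cases hx1 : x.1 ∈ K₁ <;> simp [hx1, hx2]
  obtain ⟨j, hj, hprop⟩ := key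
  -- Step 2: extend to a bijection by cardinality
  have hcardcompl : Fintype.card {x : S // ¬ x ∈ K₁ ∪ K₂} =
      Fintype.card {t : ↥K₁ × ↥K₂ // ¬ t ∈ Set.range j} := by
    rw [Fintype.card_subtype_compl, Fintype.card_subtype_compl]
    have h2' : Fintype.card {t : ↥K₁ × ↥K₂ // t ∈ Set.range j} =
        Fintype.card {x : S // x ∈ K₁ ∪ K₂} := Set.card_range_of_injective hj
    rw [h2', hcard]
    have hp : Fintype.card (↥K₁ × ↥K₂) = s ^ 2 := by
      simp [Fintype.card_coe, h₁, h₂, pow_two]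
    rw [hp]
  let c2 : {x : S // ¬ x ∈ K₁ ∪ K₂} ≃ {t : ↥K₁ × ↥K₂ // ¬ t ∈ Set.range j} :=
    Fintype.equivOfCardEq hcardcompl
  let e0 : S ≃ ↥K₁ × ↥K₂ :=
    ((Equiv.sumCompl (· ∈ K₁ ∪ K₂)).symm.trans
      (Equiv.sumCongr (Equiv.ofInjective j hj) c2)).trans
      (Equiv.sumCompl (· ∈ Set.range j))
  have he0 : ∀ (x : S) (hx : x ∈ K₁ ∪ K₂), e0 x = j ⟨x, hx⟩ := by
    intro x hx
    simp only [e0, Equiv.trans_apply, Equiv.sumCompl_symm_apply_of_pos hx,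
      Equiv.sumCongr_apply, Sum.map_inl, Equiv.sumCompl_apply_inl]
    rfl
  refine ⟨fun x => (((e0 x).1 : S), ((e0 x).2 : S)), ?_, ?_, ?_, ?_, ?_⟩
  · intro a b hab
    apply e0.injective
    have h1 := congrArg Prod.fst hab
    have h2 := congrArg Prod.snd hab
    exact Prod.ext (Subtype.ext h1) (Subtype.ext h2)
  · intro k
    exact ⟨(e0 k).1.2, (e0 k).2.2⟩
  · intro p hp1 hp2
    refine ⟨e0.symm (⟨p.1, hp1⟩, ⟨p.2, hp2⟩), ?_⟩
    simp
  · intro k hk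
    show ((e0 k).1 : S) = k
    rw [he0 k (Finset.mem_union_left _ hk)]
    exact (hprop ⟨k, Finset.mem_union_left _ hk⟩).1 hk
  · intro k hk
    show ((e0 k).2 : S) = k
    rw [he0 k (Finset.mem_union_right _ hk)]
    exact (hprop ⟨k, Finset.mem_union_right _ hk⟩).2 hk
end

section
/- There exist RochetNet menus whose revenue function is not quasiconcave. Concretely, let n = 1 item and let F be the probability measure on [0,1] with density f(x) = 3/2 for 0 < x ≤ 29/60, f(x) = 0 for 29/60 < x ≤ 49/60, and f(x) = 3/2 for 49/60 < x ≤ 1. Consider the menus with one regular option M1 = {(0,0), (1, 0.36)}, M2 = {(0,0), (1, 0.84)}, and their midpoint M3 = (1/2) M1 + (1/2) M2 = {(0,0), (1, 0.6)}. Then Rev(M1) = 0.1656, Rev(M2) = 0.2016, and Rev(M3) = 0.165, so Rev(M3) < min{Rev(M1), Rev(M2)}. -/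
open MeasureTheory

namespace Ex

/-- The density `f(x) = 3/2` on `(0, 29/60] ∪ (49/60, 1]` and `0` elsewhere. -/
noncomputable def f : ℝ → ℝ := fun x =>
  if (0 < x ∧ x ≤ 29 / 60) ∨ (49 / 60 < x ∧ x ≤ 1) then 3 / 2 else 0

/-- The valuation distribution with density `f`. -/
noncomputable def F : Measure ℝ := volume.withDensity fun x => ENNReal.ofReal (f x)

/-- A single-item menu with two options (default plus one regular option):
each option is an (allocation, price) pair. -/
abbrev Menu1 := Fin 2 → ℝ × ℝ

def util (M : Menu1) (v : ℝ) (k : Fin 2) : ℝ := v * (M k).1 - (M k).2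

/-- Price extracted at valuation `v`: the maximal price among utility-maximizing
options. -/
noncomputable def price (M : Menu1) (v : ℝ) : ℝ :=
  sSup {p : ℝ | ∃ k, (∀ k', util M v k' ≤ util M v k) ∧ p = (M k).2}

/-- Expected revenue under `F`. -/
noncomputable def Rev (M : Menu1) : ℝ := ∫ v, price M v ∂F

/-- Option-wise convex combination of two menus. -/
noncomputable def comb (lam : ℝ) (M M' : Menu1) : Menu1 :=
  fun k => (lam * (M k).1 + (1 - lam) * (M' k).1, lam * (M k).2 + (1 - lam) * (M' k).2)

noncomputable def M₁ : Menu1 := ![(0, 0), (1, 0.36)]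
noncomputable def M₂ : Menu1 := ![(0, 0), (1, 0.84)]

def S : Set ℝ := Set.Ioc 0 (29/60) ∪ Set.Ioc (49/60) 1

lemma measurableSet_S : MeasurableSet S :=
  (measurableSet_Ioc.union measurableSet_Ioc)

lemma f_eq (x : ℝ) : ENNReal.ofReal (f x) = S.indicator (fun _ => ENNReal.ofReal (3/2)) x := by
  by_cases h : (0 < x ∧ x ≤ 29 / 60) ∨ (49 / 60 < x ∧ x ≤ 1)
  · rw [f, if_pos h, Set.indicator_of_mem]
    simpa [S, Set.mem_union, Set.mem_Ioc] using h
  · rw [f, if_neg h, Set.indicator_of_notMem]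
    · simp
    · simpa [S, Set.mem_union, Set.mem_Ioc] using h

lemma F_apply (s : Set ℝ) (hs : MeasurableSet s) :
    F s = ENNReal.ofReal (3/2) * volume (S ∩ s) := by
  rw [F, withDensity_apply _ hs]
  calc ∫⁻ x in s, ENNReal.ofReal (f x) ∂volume
      = ∫⁻ x in s, S.indicator (fun _ => ENNReal.ofReal (3/2)) x ∂volume :=
        lintegral_congr fun x => f_eq x
    _ = ∫⁻ x in S, (fun _ => ENNReal.ofReal (3/2)) x ∂(volume.restrict s) := by
        rw [lintegral_indicator measurableSet_S]
    _ = ENNReal.ofReal (3/2) * volume (S ∩ s) := by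
        rw [Measure.restrict_restrict measurableSet_S, setLIntegral_const]

lemma price_eq (p : ℝ) (hp : 0 ≤ p) (v : ℝ) :
    price ![(0,0),(1,p)] v = if p ≤ v then p else 0 := by
  unfold price
  split_ifs with h
  · apply IsGreatest.csSup_eq
    constructor
    · refine ⟨1, ?_, by simp⟩
      intro k'; fin_cases k' <;> simp [util] <;> linarith
    · rintro q ⟨k, hk, rfl⟩
      fin_cases k <;> simp <;> linarith
  · apply IsGreatest.csSup_eq
    constructor
    · refine ⟨0, ?_, by simp⟩
      intro k'; fin_cases k' <;> simp [util] <;> linarith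
    · rintro q ⟨k, hk, rfl⟩
      fin_cases k
      · simp
      · exfalso
        have h0 := hk 0
        simp [util] at h0
        exact h (by linarith)

lemma rev_eq (p : ℝ) (hp : 0 < p) :
    Rev ![(0,0),(1,p)] = (F (Set.Ici p)).toReal * p := by
  unfold Rev
  have hpt : ∀ v, price ![(0,0),(1,p)] v = (Set.Ici p).indicator (fun _ => p) v := by
    intro v; rw [price_eq p hp.le]
    by_cases h : p ≤ v
    · simp [Set.indicator_apply, Set.mem_Ici, h]
    · simp [Set.indicator_apply, Set.mem_Ici, h]
  simp only [hpt]
  rw [integral_indicator_const _ measurableSet_Ici, smul_eq_mul, measureReal_def]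

lemma inter1 : S ∩ Set.Ici (0.36 : ℝ) = Set.Icc 0.36 (29/60) ∪ Set.Ioc (49/60) 1 := by
  ext x
  simp only [S, Set.mem_inter_iff, Set.mem_union, Set.mem_Ioc, Set.mem_Icc, Set.mem_Ici]
  constructor
  · rintro ⟨(⟨h1, h2⟩ | ⟨h1, h2⟩), h3⟩
    · exact Or.inl ⟨h3, h2⟩
    · exact Or.inr ⟨h1, h2⟩
  · rintro (⟨h1, h2⟩ | ⟨h1, h2⟩)
    · refine ⟨Or.inl ⟨by norm_num at h1 ⊢; linarith, h2⟩, h1⟩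
    · refine ⟨Or.inr ⟨h1, h2⟩, by norm_num at h1 ⊢; linarith⟩

lemma inter2 : S ∩ Set.Ici (0.84 : ℝ) = Set.Icc 0.84 1 := by
  ext x
  simp only [S, Set.mem_inter_iff, Set.mem_union, Set.mem_Ioc, Set.mem_Icc, Set.mem_Ici]
  constructor
  · rintro ⟨(⟨h1, h2⟩ | ⟨h1, h2⟩), h3⟩
    · exfalso; norm_num at h2 h3 ⊢; linarith
    · exact ⟨h3, h2⟩
  · rintro ⟨h1, h2⟩
    exact ⟨Or.inr ⟨by norm_num at h1 ⊢; linarith, h2⟩, h1⟩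

lemma inter3 : S ∩ Set.Ici (0.6 : ℝ) = Set.Ioc (49/60) 1 := by
  ext x
  simp only [S, Set.mem_inter_iff, Set.mem_union, Set.mem_Ioc, Set.mem_Ici]
  constructor
  · rintro ⟨(⟨h1, h2⟩ | ⟨h1, h2⟩), h3⟩
    · exfalso; norm_num at h2 h3 ⊢; linarith
    · exact ⟨h1, h2⟩
  · rintro ⟨h1, h2⟩
    exact ⟨Or.inr ⟨h1, h2⟩, by norm_num at h1 ⊢; linarith⟩

lemma rev1 : Rev M₁ = 0.1656 := by
  have : Rev M₁ = (F (Set.Ici (0.36:ℝ))).toReal * 0.36 := by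
    rw [M₁]; exact rev_eq 0.36 (by norm_num)
  rw [this, F_apply _ measurableSet_Ici, inter1]
  have hd : Disjoint (Set.Icc (0.36:ℝ) (29/60)) (Set.Ioc (49/60) 1) := by
    rw [Set.disjoint_left]
    intro x hx hy
    have h1 := (Set.mem_Icc.mp hx).2
    have h2 := (Set.mem_Ioc.mp hy).1
    linarith
  rw [measure_union hd measurableSet_Ioc, Real.volume_Icc, Real.volume_Ioc,
    ← ENNReal.ofReal_add (by norm_num) (by norm_num), ← ENNReal.ofReal_mul (by norm_num),
    ENNReal.toReal_ofReal (by norm_num)]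
  norm_num

lemma rev2 : Rev M₂ = 0.2016 := by
  have : Rev M₂ = (F (Set.Ici (0.84:ℝ))).toReal * 0.84 := by
    rw [M₂]; exact rev_eq 0.84 (by norm_num)
  rw [this, F_apply _ measurableSet_Ici, inter2, Real.volume_Icc,
    ← ENNReal.ofReal_mul (by norm_num), ENNReal.toReal_ofReal (by norm_num)]
  norm_num

lemma comb_eq : comb (1 / 2) M₁ M₂ = ![(0, 0), (1, 0.6)] := by
  funext k
  fin_cases k <;> simp [comb, M₁, M₂, Prod.ext_iff] <;> norm_num

lemma rev3 : Rev (comb (1 / 2) M₁ M₂) = 0.165 := by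
  rw [comb_eq]
  have : Rev ![(0,0),(1,(0.6:ℝ))] = (F (Set.Ici (0.6:ℝ))).toReal * 0.6 :=
    rev_eq 0.6 (by norm_num)
  rw [this, F_apply _ measurableSet_Ici, inter3, Real.volume_Ioc,
    ← ENNReal.ofReal_mul (by norm_num), ENNReal.toReal_ofReal (by norm_num)]
  norm_num

/-- For the displayed value density, `Rev M₁ = 0.1656`,
`Rev M₂ = 0.2016`, the midpoint menu `M₃ = ½ M₁ + ½ M₂` equals `{(0,0), (1, 0.6)}` and
has `Rev M₃ = 0.165 < min (Rev M₁) (Rev M₂)`; hence the revenue is not quasiconcave. -/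
theorem statement10 :
    Rev M₁ = 0.1656 ∧ Rev M₂ = 0.2016 ∧
    comb (1 / 2) M₁ M₂ = ![(0, 0), (1, 0.6)] ∧
    Rev (comb (1 / 2) M₁ M₂) = 0.165 ∧
    Rev (comb (1 / 2) M₁ M₂) < min (Rev M₁) (Rev M₂) := by
  refine ⟨rev1, rev2, comb_eq, rev3, ?_⟩
  rw [rev1, rev2, rev3]
  norm_num

end Ex
end
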